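/- For x ∈ ℝ^d with x ≠ 0, the unique t > 0 satisfying 2‖(1−r)⊙x‖₁/t + ‖r⊙x‖₂²/t² = 1 is t = ‖(1−r)⊙x‖₁ + √(‖(1−r)⊙x‖₁² + ‖r⊙x‖₂²), provided ‖(1−r)⊙x‖₁ and ‖r⊙x‖₂ are not both zero. -/
import Mathlib


noncomputable def eye {d : ℕ} (r θ : Fin d → ℝ) : ℝ :=
  (∑ i, (1 - r i) * |θ i|) +
    Real.sqrt ((∑ i, (1 - r i) * |θ i|) ^ 2 + ∑ i, (r i * θ i) ^ 2)

theorem eye_gauge_unique {d : ℕ} (r x : Fin d → ℝ) (hr : ∀ i, r i = 0 ∨ r i = 1)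
    (hx : x ≠ 0)
    (A : ℝ) (hA : A = ∑ i, (1 - r i) * |x i|)
    (B2 : ℝ) (hB2 : B2 = ∑ i, (r i * x i) ^ 2)
    (hAB : ¬ (A = 0 ∧ B2 = 0)) :
    ∀ t : ℝ, 0 < t →
      (2 * A / t + B2 / t ^ 2 = 1 ↔ t = A + Real.sqrt (A ^ 2 + B2)) := by
  have hA0 : 0 ≤ A := by
    rw [hA]
    apply Finset.sum_nonneg
    intro i _
    rcases hr i with h | h <;> simp [h, abs_nonneg] <;> positivity
  have hB0 : 0 ≤ B2 := by
    rw [hB2]; positivity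
  have hpos : 0 < A ^ 2 + B2 := by
    rcases lt_or_eq_of_le hA0 with h | h
    · nlinarith
    rcases lt_or_eq_of_le hB0 with h2 | h2
    · nlinarith
    · exact absurd ⟨h.symm, h2.symm⟩ hAB
  set s := Real.sqrt (A ^ 2 + B2) with hs
  have hs2 : s ^ 2 = A ^ 2 + B2 := Real.sq_sqrt hpos.le
  have hsp : 0 < s := Real.sqrt_pos.mpr hpos
  intro t ht
  constructor
  · intro h
    have ht' : t ≠ 0 := ne_of_gt ht
    have key : t ^ 2 = 2 * A * t + B2 := by
      field_simp at h
      nlinarith [h]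
    have hfac : (t - A - s) * (t - A + s) = 0 := by nlinarith
    rcases mul_eq_zero.mp hfac with h1 | h1
    · linarith
    · exfalso
      have : t = A - s := by linarith
      nlinarith
  · intro h
    have ht' : t ≠ 0 := ne_of_gt ht
    have key : t ^ 2 = 2 * A * t + B2 := by
      subst h; nlinarith
    field_simp
    nlinarith
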